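/- Let I be a compact real interval and let f₀, …, fₙ : I → ℝ be n times continuously differentiable on I. Then there exists a constant c > 0, depending only on f₀, …, fₙ and I, such that for all x₀, …, xₙ ∈ I one has |det[f_i(x_j)]_{0 ≤ i,j ≤ n}| ≤ c · |V(x₀, …, xₙ)|. -/

import Mathlib

open Set MeasureTheory intervalIntegral Filter

private lemma itdw_open {m : ℕ} {f : ℝ → ℝ} {s : Set ℝ} (hs : IsOpen s) {x : ℝ} (hx : x ∈ s) :
    iteratedDerivWithin m f s x = iteratedDeriv m f x := by
  rw [iteratedDerivWithin_eq_iteratedFDerivWithin, iteratedDeriv_eq_iteratedFDeriv]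
  rw [show s = univ ∩ s by simp, iteratedFDerivWithin_inter_open hs hx]
  simp [iteratedFDerivWithin_univ]

private lemma mem_seg {a b x₀ t s : ℝ} (hx₀ : x₀ ∈ Ioo a b) (ht : t ∈ Ioo a b)
    (hs : s ∈ Icc (0:ℝ) 1) : x₀ + s * (t - x₀) ∈ Ioo a b := by
  have h1 : x₀ + s * (t - x₀) = (1 - s) * x₀ + s * t := by ring
  rw [h1]
  have := (convex_Ioo a b) hx₀ ht (by linarith [hs.1, hs.2] : (0:ℝ) ≤ 1 - s) hs.1 (by ring)
  simpa [smul_eq_mul] using this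

/-- Key analytic lemma: division of a `C^(n+1)` function by `t - x₀`. -/
private lemma key_div (n : ℕ) {a b x₀ : ℝ} {u : ℝ → ℝ} {M : ℝ}
    (hx₀ : x₀ ∈ Ioo a b)
    (hu : ContDiffOn ℝ (n + 1 : ℕ) u (Ioo a b))
    (hM : ∀ k ≤ n + 1, ∀ t ∈ Ioo a b, |iteratedDeriv k u t| ≤ M) :
    ∃ g : ℝ → ℝ, ContDiffOn ℝ (n : ℕ) g (Ioo a b) ∧
      (∀ k ≤ n, ∀ t ∈ Ioo a b, |iteratedDeriv k g t| ≤ M) ∧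
      (∀ t ∈ Ioo a b, u t = u x₀ + (t - x₀) * g t) := by
  have hopen : IsOpen (Ioo a b) := isOpen_Ioo
  have hM0 : 0 ≤ M := le_trans (abs_nonneg _) (hM 0 (by omega) x₀ hx₀)
  set D : ℕ → ℝ → ℝ := fun m => iteratedDeriv m u with hD
  -- continuity of iterated derivatives on the open interval
  have Dcont : ∀ m ≤ n + 1, ContinuousOn (D m) (Ioo a b) := by
    intro m hm
    have := hu.continuousOn_iteratedDerivWithin (by exact_mod_cast hm) hopen.uniqueDiffOn
    exact this.congr fun t ht => (itdw_open hopen ht).symm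
  -- differentiability
  have Dder : ∀ m ≤ n, ∀ t ∈ Ioo a b, HasDerivAt (D m) (D (m + 1) t) t := by
    intro m hm t ht
    have hdo : DifferentiableOn ℝ (iteratedDerivWithin m u (Ioo a b)) (Ioo a b) :=
      hu.differentiableOn_iteratedDerivWithin (by exact_mod_cast Nat.lt_succ_of_le hm)
        hopen.uniqueDiffOn
    have h1 : DifferentiableAt ℝ (iteratedDerivWithin m u (Ioo a b)) t :=
      (hdo t ht).differentiableAt (hopen.mem_nhds ht)
    have heq : iteratedDerivWithin m u (Ioo a b) =ᶠ[nhds t] D m :=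
      Filter.eventuallyEq_of_mem (hopen.mem_nhds ht) fun y hy => itdw_open hopen hy
    have h2 : DifferentiableAt ℝ (D m) t := h1.congr_of_eventuallyEq heq.symm
    have h3 := h2.hasDerivAt
    have h4 : D (m + 1) = deriv (D m) := iteratedDeriv_succ
    rw [h4]; exact h3
  -- the divided function, defined by an integral
  set G : ℕ → ℝ → ℝ := fun m t => ∫ s in (0:ℝ)..1, s ^ m * D (m + 1) (x₀ + s * (t - x₀)) with hG
  -- continuity of integrands
  have icont : ∀ m ≤ n, ∀ t ∈ Ioo a b,
      ContinuousOn (fun s : ℝ => s ^ m * D (m + 1) (x₀ + s * (t - x₀))) (Icc (0:ℝ) 1) := by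
    intro m hm t ht
    apply ContinuousOn.mul (by fun_prop)
    apply (Dcont (m + 1) (by omega)).comp (by fun_prop)
    intro s hs
    exact mem_seg hx₀ ht hs
  have iint : ∀ m ≤ n, ∀ t ∈ Ioo a b,
      IntervalIntegrable (fun s : ℝ => s ^ m * D (m + 1) (x₀ + s * (t - x₀))) volume 0 1 := by
    intro m hm t ht
    exact ((icont m hm t ht).mono (by rw [uIcc_of_le] <;> norm_num)).intervalIntegrable
  have imeas : ∀ m ≤ n, ∀ t ∈ Ioo a b,
      AEStronglyMeasurable (fun s : ℝ => s ^ m * D (m + 1) (x₀ + s * (t - x₀)))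
        (volume.restrict (Set.uIoc (0:ℝ) 1)) := by
    intro m hm t ht
    apply ContinuousOn.aestronglyMeasurable _ measurableSet_uIoc
    exact (icont m hm t ht).mono (by rw [uIoc_of_le (by norm_num)]; exact Ioc_subset_Icc_self)
  -- uniform bound
  have Gbound : ∀ m ≤ n, ∀ t ∈ Ioo a b, |G m t| ≤ M := by
    intro m hm t ht
    have := intervalIntegral.norm_integral_le_of_norm_le_const
      (C := M) (f := fun s : ℝ => s ^ m * D (m + 1) (x₀ + s * (t - x₀)))
      (a := 0) (b := 1) ?_
    · simpa [hG] using this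
    · intro s hs
      rw [uIoc_of_le (by norm_num)] at hs
      have hs' : s ∈ Icc (0:ℝ) 1 := ⟨hs.1.le, hs.2⟩
      have h1 : |s ^ m| ≤ 1 := by
        rw [abs_pow]; apply pow_le_one₀ (abs_nonneg _); rw [abs_le]; constructor <;> linarith [hs'.1, hs'.2]
      have h2 : |D (m + 1) (x₀ + s * (t - x₀))| ≤ M :=
        hM (m + 1) (by omega) _ (mem_seg hx₀ ht hs')
      calc ‖s ^ m * D (m + 1) (x₀ + s * (t - x₀))‖ = |s ^ m| * |D (m + 1) (x₀ + s * (t - x₀))| :=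
            abs_mul _ _
        _ ≤ 1 * M := mul_le_mul h1 h2 (abs_nonneg _) zero_le_one
        _ = M := one_mul M
  -- derivative of G m is G (m+1)
  have Gderiv : ∀ m, m + 1 ≤ n → ∀ t ∈ Ioo a b, HasDerivAt (G m) (G (m + 1) t) t := by
    intro m hm t ht
    obtain ⟨ε, hε, hball⟩ := Metric.isOpen_iff.1 hopen t ht
    have hmain := intervalIntegral.hasDerivAt_integral_of_dominated_loc_of_deriv_le
      (F := fun t' s => s ^ m * D (m + 1) (x₀ + s * (t' - x₀)))
      (F' := fun t' s => s ^ (m + 1) * D (m + 2) (x₀ + s * (t' - x₀)))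
      (x₀ := t) (s := Metric.ball t ε) (bound := fun _ => M) (μ := volume) (a := 0) (b := 1) (Metric.ball_mem_nhds t hε)
      ?_ (iint m (by omega) t ht) ?_ ?_ ?_ ?_
    · exact hmain.2
    · filter_upwards [hopen.mem_nhds ht] with t' ht'
      exact imeas m (by omega) t' ht'
    · have := imeas (m + 1) hm t ht
      simpa using this
    · filter_upwards [] with s
      intro hs t' ht'
      have ht'' : t' ∈ Ioo a b := hball ht'
      rw [uIoc_of_le (by norm_num)] at hs
      have hs' : s ∈ Icc (0:ℝ) 1 := ⟨hs.1.le, hs.2⟩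
      have h1 : |s ^ (m + 1)| ≤ 1 := by
        rw [abs_pow]; apply pow_le_one₀ (abs_nonneg _); rw [abs_le]; constructor <;> linarith [hs'.1, hs'.2]
      have h2 : |D (m + 2) (x₀ + s * (t' - x₀))| ≤ M :=
        hM (m + 2) (by omega) _ (mem_seg hx₀ ht'' hs')
      calc ‖s ^ (m + 1) * D (m + 2) (x₀ + s * (t' - x₀))‖
          = |s ^ (m + 1)| * |D (m + 2) (x₀ + s * (t' - x₀))| := abs_mul _ _
        _ ≤ 1 * M := mul_le_mul h1 h2 (abs_nonneg _) zero_le_one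
        _ = M := one_mul M
    · exact intervalIntegrable_const
    · filter_upwards [] with s
      intro hs t' ht'
      have ht'' : t' ∈ Ioo a b := hball ht'
      rw [uIoc_of_le (by norm_num)] at hs
      have hs' : s ∈ Icc (0:ℝ) 1 := ⟨hs.1.le, hs.2⟩
      have haff : HasDerivAt (fun t' : ℝ => x₀ + s * (t' - x₀)) s t' := by
        simpa using ((hasDerivAt_id t').sub_const x₀).const_mul s |>.const_add x₀
      have hcomp : HasDerivAt (fun t' : ℝ => D (m + 2) (x₀ + s * (t' - x₀)) * s) (1) t' → True := fun _ => trivial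
      have hD' : HasDerivAt (D (m + 1)) (D (m + 2) (x₀ + s * (t' - x₀))) (x₀ + s * (t' - x₀)) :=
        Dder (m + 1) (by omega) _ (mem_seg hx₀ ht'' hs')
      have := (hD'.comp t' haff).const_mul (s ^ m)
      convert this using 1
      · rfl
      · rfl
      · ring
  -- continuity of G m
  have Gcont : ∀ m ≤ n, ContinuousOn (G m) (Ioo a b) := by
    intro m hm
    intro t ht
    have hne : (nhdsWithin t (Ioo a b)).NeBot :=
      mem_closure_iff_nhdsWithin_neBot.1 (subset_closure ht)
    refine intervalIntegral.tendsto_integral_filter_of_dominated_convergence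
      (μ := volume) (a := 0) (b := 1) (l := nhdsWithin t (Ioo a b))
      (F := fun t' s => s ^ m * D (m + 1) (x₀ + s * (t' - x₀)))
      (f := fun s => s ^ m * D (m + 1) (x₀ + s * (t - x₀))) (fun _ => M) ?_ ?_ ?_ ?_
    · filter_upwards [self_mem_nhdsWithin] with t' ht'
      exact imeas m hm t' ht'
    · filter_upwards [self_mem_nhdsWithin] with t' ht'
      filter_upwards [] with s hs
      rw [uIoc_of_le (by norm_num)] at hs
      have hs' : s ∈ Icc (0:ℝ) 1 := ⟨hs.1.le, hs.2⟩
      have h1 : |s ^ m| ≤ 1 := by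
        rw [abs_pow]; apply pow_le_one₀ (abs_nonneg _); rw [abs_le]
        constructor <;> linarith [hs'.1, hs'.2]
      have h2 : |D (m + 1) (x₀ + s * (t' - x₀))| ≤ M :=
        hM (m + 1) (by omega) _ (mem_seg hx₀ ht' hs')
      calc ‖s ^ m * D (m + 1) (x₀ + s * (t' - x₀))‖
          = |s ^ m| * |D (m + 1) (x₀ + s * (t' - x₀))| := abs_mul _ _
        _ ≤ 1 * M := mul_le_mul h1 h2 (abs_nonneg _) zero_le_one
        _ = M := one_mul M
    · exact intervalIntegrable_const
    · filter_upwards [] with s hs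
      rw [uIoc_of_le (by norm_num)] at hs
      have hs' : s ∈ Icc (0:ℝ) 1 := ⟨hs.1.le, hs.2⟩
      have hcD : ContinuousAt (D (m + 1)) (x₀ + s * (t - x₀)) :=
        (Dcont (m + 1) (by omega)).continuousAt (hopen.mem_nhds (mem_seg hx₀ ht hs'))
      have hcaff : ContinuousAt (fun t' : ℝ => x₀ + s * (t' - x₀)) t := by fun_prop
      have h0 := ContinuousAt.comp (g := D (m + 1))
        (f := fun t' : ℝ => x₀ + s * (t' - x₀)) (x := t) hcD hcaff
      have : ContinuousAt (fun t' : ℝ => s ^ m * D (m + 1) (x₀ + s * (t' - x₀))) t :=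
        h0.const_mul _
      exact this.continuousWithinAt.tendsto
  -- iterated derivatives of G 0 agree with G k on the interval
  have Geq : ∀ k ≤ n, ∀ t ∈ Ioo a b, iteratedDeriv k (G 0) t = G k t := by
    intro k
    induction k with
    | zero => intro _ t _; rw [iteratedDeriv_zero]
    | succ k ih =>
      intro hk t ht
      rw [iteratedDeriv_succ]
      have heq : iteratedDeriv k (G 0) =ᶠ[nhds t] G k :=
        Filter.eventuallyEq_of_mem (hopen.mem_nhds ht) fun y hy => ih (by omega) y hy
      rw [heq.deriv_eq]
      exact (Gderiv k hk t ht).deriv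
  -- smoothness of G 0
  have Gsmooth : ∀ k : ℕ, ∀ m : ℕ, m + k ≤ n → ContDiffOn ℝ (k : ℕ) (G m) (Ioo a b) := by
    intro k
    induction k with
    | zero =>
      intro m hm
      exact contDiffOn_zero.2 (Gcont m (by omega))
    | succ k ih =>
      intro m hm
      have hcast : ((k + 1 : ℕ) : WithTop ℕ∞) = (k : WithTop ℕ∞) + 1 := by push_cast; rfl
      rw [hcast, contDiffOn_succ_iff_deriv_of_isOpen hopen]
      refine ⟨fun t ht => ((Gderiv m (by omega) t ht).differentiableAt).differentiableWithinAt,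
        by simp, ?_⟩
      exact (ih (m + 1) (by omega)).congr fun t ht => (Gderiv m (by omega) t ht).deriv
  -- the division identity
  have Gid : ∀ t ∈ Ioo a b, u t = u x₀ + (t - x₀) * G 0 t := by
    intro t ht
    have hsub : uIcc x₀ t ⊆ Ioo a b := by
      rw [uIcc_eq_union]
      exact union_subset ((ordConnected_Ioo).out hx₀ ht) ((ordConnected_Ioo).out ht hx₀)
    have hFTC : ∫ y in x₀..t, deriv u y = u t - u x₀ := by
      apply intervalIntegral.integral_eq_sub_of_hasDerivAt
      · intro y hy
        have hy' : y ∈ Ioo a b := hsub hy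
        have := Dder 0 (by omega) y hy'
        simpa [hD, iteratedDeriv_zero, iteratedDeriv_one] using this
      · apply ContinuousOn.intervalIntegrable
        apply ((Dcont 1 (by omega)).mono hsub).congr
        intro y hy
        simp [hD, iteratedDeriv_one]
    have hsubst : (t - x₀) * G 0 t = ∫ y in x₀..t, deriv u y := by
      have h1 : G 0 t = ∫ s in (0:ℝ)..1, deriv u ((t - x₀) * s + x₀) := by
        rw [hG]
        apply intervalIntegral.integral_congr
        intro s _
        simp [hD, iteratedDeriv_one]
        ring_nf
      rw [h1]
      have := intervalIntegral.smul_integral_comp_mul_add (a := (0:ℝ)) (b := 1)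
        (f := fun y => deriv u y) (t - x₀) x₀
      simp only [smul_eq_mul] at this
      rw [this]
      norm_num
    rw [hsubst, hFTC]; ring
  refine ⟨G 0, ?_, ?_, Gid⟩
  · exact Gsmooth n 0 (by omega)
  · intro k hk t ht
    rw [Geq k hk t ht]
    exact Gbound k hk t ht

private lemma main_ind : ∀ n : ℕ, ∀ a b M : ℝ, ∀ f : Fin (n + 1) → ℝ → ℝ,
    (∀ i, ContDiffOn ℝ (n : ℕ) (f i) (Ioo a b)) →
    (∀ i, ∀ k ≤ n, ∀ t ∈ Ioo a b, |iteratedDeriv k (f i) t| ≤ M) →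
    ∀ x : Fin (n + 1) → ℝ, (∀ j, x j ∈ Ioo a b) →
    |Matrix.det (Matrix.of fun i j : Fin (n + 1) => f i (x j))| ≤
      (n + 1).factorial * M ^ (n + 1) * |∏ i : Fin (n + 1), ∏ j ∈ Finset.Ioi i, (x j - x i)| := by
  intro n
  induction n with
  | zero =>
    intro a b M f hf hM x hx
    have h1 : (∏ i : Fin 1, ∏ j ∈ Finset.Ioi i, (x j - x i)) = 1 := by
      simp
    rw [h1]
    have h2 : Matrix.det (Matrix.of fun i j : Fin 1 => f i (x j)) = f 0 (x 0) := by
      rw [Matrix.det_fin_one]; rfl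
    rw [h2]
    simpa using hM 0 0 le_rfl (x 0) (hx 0)
  | succ n ih =>
    intro a b M f hf hM x hx
    have hM0 : 0 ≤ M := le_trans (abs_nonneg _) (hM 0 0 (by omega) (x 0) (hx 0))
    -- get the divided functions
    have hkey : ∀ i : Fin (n + 2), ∃ g : ℝ → ℝ, ContDiffOn ℝ (n : ℕ) g (Ioo a b) ∧
        (∀ k ≤ n, ∀ t ∈ Ioo a b, |iteratedDeriv k g t| ≤ M) ∧
        (∀ t ∈ Ioo a b, f i t = f i (x 0) + (t - x 0) * g t) := by
      intro i
      exact key_div n (hx 0) (hf i) (hM i)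
    choose g hg1 hg2 hg3 using hkey
    set x₀ := x 0 with hx₀
    set B : Matrix (Fin (n + 2)) (Fin (n + 2)) ℝ :=
      Matrix.of fun i j => if j = 0 then f i x₀ else g i (x j) with hB
    set C : Matrix (Fin (n + 2)) (Fin (n + 2)) ℝ :=
      Matrix.of fun k j => if j = 0 then (if k = 0 then 1 else 0)
        else if k = 0 then 1 else if k = j then x j - x₀ else 0 with hC
    have hAC : (Matrix.of fun i j : Fin (n + 2) => f i (x j)) = B * C := by
      ext i j
      rw [Matrix.mul_apply]
      rcases eq_or_ne j 0 with rfl | hj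
      · simp [hB, hC, Finset.sum_ite_eq', Matrix.of_apply, hx₀]
      · have hCdecomp : ∀ k, C k j =
            (if k = 0 then (1:ℝ) else 0) + (x j - x₀) * (if k = j then 1 else 0) := by
          intro k
          rcases eq_or_ne k 0 with rfl | hk
          · simp [hC, hj, Ne.symm hj]
          · rcases eq_or_ne k j with rfl | hkj
            · simp [hC, hj, hk]
            · simp [hC, hj, hk, hkj]
        simp only [hCdecomp, mul_add, Finset.sum_add_distrib, mul_ite, mul_one, mul_zero,
          Finset.sum_ite_eq', Finset.mem_univ, if_true]
        simp only [hB, Matrix.of_apply, if_pos rfl, if_neg hj]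
        rw [hg3 i (x j) (hx j)]
        simp only [ite_true, if_true]
        ring
    -- determinant of C
    have hCtri : C.BlockTriangular id := by
      intro i j hij
      have hine : i ≠ 0 := by
        intro h; subst h; simp at hij
      rcases eq_or_ne j 0 with rfl | hj
      · simp [hC, hine]
      · have : i ≠ j := ne_of_gt hij
        simp [hC, hine, hj, this]
    have hdetC : C.det = ∏ j' : Fin (n + 1), (x j'.succ - x₀) := by
      rw [Matrix.det_of_upperTriangular hCtri]
      rw [Fin.prod_univ_succ]
      have h0 : C 0 0 = 1 := by simp [hC]
      rw [h0, one_mul]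
      apply Finset.prod_congr rfl
      intro j' _
      simp [hC, Fin.succ_ne_zero]
    -- bound on det B
    have hminor : ∀ i : Fin (n + 2),
        (B.submatrix i.succAbove Fin.succ) =
          Matrix.of fun i' j' : Fin (n + 1) => g (i.succAbove i') (x j'.succ) := by
      intro i
      ext i' j'
      simp [hB, Matrix.submatrix_apply, Fin.succ_ne_zero]
    have hminor_bound : ∀ i : Fin (n + 2),
        |(B.submatrix i.succAbove Fin.succ).det| ≤
          (n + 1).factorial * M ^ (n + 1) *
            |∏ i' : Fin (n + 1), ∏ j' ∈ Finset.Ioi i', (x j'.succ - x i'.succ)| := by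
      intro i
      rw [hminor i]
      exact ih a b M (fun i' => g (i.succAbove i')) (fun i' => hg1 _)
        (fun i' => hg2 _) (fun j' => x j'.succ) (fun j' => hx _)
    have hdetB : |B.det| ≤ (n + 2) * M * ((n + 1).factorial * M ^ (n + 1) *
        |∏ i' : Fin (n + 1), ∏ j' ∈ Finset.Ioi i', (x j'.succ - x i'.succ)|) := by
      rw [Matrix.det_succ_column_zero]
      refine le_trans (Finset.abs_sum_le_sum_abs _ _) ?_
      have hcard : (Finset.univ : Finset (Fin (n + 2))).card = n + 2 := by simp
      calc ∑ i : Fin (n + 2), |(-1 : ℝ) ^ (i : ℕ) * B i 0 * (B.submatrix i.succAbove Fin.succ).det|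
          ≤ ∑ i : Fin (n + 2), M * ((n + 1).factorial * M ^ (n + 1) *
            |∏ i' : Fin (n + 1), ∏ j' ∈ Finset.Ioi i', (x j'.succ - x i'.succ)|) := by
            apply Finset.sum_le_sum
            intro i _
            rw [abs_mul, abs_mul]
            have h1 : |(-1 : ℝ) ^ (i : ℕ)| = 1 := by
              rw [abs_pow, abs_neg, abs_one, one_pow]
            rw [h1, one_mul]
            have h2 : |B i 0| ≤ M := by
              have : B i 0 = f i x₀ := by simp [hB]
              rw [this]
              exact hM i 0 (by omega) x₀ (hx 0)
            exact mul_le_mul h2 (hminor_bound i) (abs_nonneg _)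
              (le_trans (abs_nonneg _) h2)
        _ = (n + 2) * M * ((n + 1).factorial * M ^ (n + 1) *
            |∏ i' : Fin (n + 1), ∏ j' ∈ Finset.Ioi i', (x j'.succ - x i'.succ)|) := by
            rw [Finset.sum_const, hcard]
            push_cast
            ring
    -- Vandermonde splitting
    have hVsplit : (∏ i : Fin (n + 2), ∏ j ∈ Finset.Ioi i, (x j - x i)) =
        (∏ j' : Fin (n + 1), (x j'.succ - x₀)) *
          ∏ i' : Fin (n + 1), ∏ j' ∈ Finset.Ioi i', (x j'.succ - x i'.succ) := by
      rw [Fin.prod_univ_succ]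
      congr 1
      · rw [Fin.prod_Ioi_zero]
      · apply Finset.prod_congr rfl
        intro i' _
        rw [Fin.prod_Ioi_succ]
    -- combine
    rw [hAC, Matrix.det_mul, hdetC, abs_mul, hVsplit, abs_mul]
    have habs1 : (0:ℝ) ≤ |∏ j' : Fin (n + 1), (x j'.succ - x₀)| := abs_nonneg _
    calc |B.det| * |∏ j' : Fin (n + 1), (x j'.succ - x₀)|
        ≤ ((n + 2) * M * ((n + 1).factorial * M ^ (n + 1) *
            |∏ i' : Fin (n + 1), ∏ j' ∈ Finset.Ioi i', (x j'.succ - x i'.succ)|)) *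
          |∏ j' : Fin (n + 1), (x j'.succ - x₀)| :=
          mul_le_mul_of_nonneg_right hdetB habs1
      _ = (n + 1 + 1).factorial * M ^ (n + 1 + 1) *
          (|∏ j' : Fin (n + 1), (x j'.succ - x₀)| *
            |∏ i' : Fin (n + 1), ∏ j' ∈ Finset.Ioi i', (x j'.succ - x i'.succ)|) := by
          rw [show ((n + 1 + 1).factorial : ℝ) = (n + 2) * (n + 1).factorial by
            rw [show n + 1 + 1 = n + 2 from rfl, Nat.factorial_succ]; push_cast; ring]
          ring

/-- On a compact interval `[a,b]`, for `f₀, …, fₙ` of class `C^n` there exists `c > 0`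
such that `|det[fᵢ(xⱼ)]| ≤ c·|V(x₀, …, xₙ)|` for all `x₀, …, xₙ ∈ [a,b]`. -/
theorem det_le_vandermonde (n : ℕ) (a b : ℝ) (f : Fin (n + 1) → ℝ → ℝ)
    (hf : ∀ i, ContDiffOn ℝ n (f i) (Set.Icc a b)) :
    ∃ c : ℝ, 0 < c ∧ ∀ x : Fin (n + 1) → ℝ, (∀ i, x i ∈ Set.Icc a b) →
      |Matrix.det (Matrix.of fun i j : Fin (n + 1) => f i (x j))| ≤
        c * |∏ i : Fin (n + 1), ∏ j ∈ Finset.Ioi i, (x j - x i)| := by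
  rcases lt_trichotomy a b with hab | rfl | hab
  · -- main case a < b
    -- uniform bound on iterated derivatives
    have hbd : ∀ p : Fin (n + 1) × Fin (n + 1), ∃ C : ℝ, ∀ t ∈ Icc a b,
        |iteratedDerivWithin p.2 (f p.1) (Icc a b) t| ≤ C := by
      intro p
      obtain ⟨C, hC⟩ := (isCompact_Icc (a := a) (b := b)).exists_bound_of_continuousOn
        ((hf p.1).continuousOn_iteratedDerivWithin (by exact_mod_cast Fin.is_le p.2)
          (uniqueDiffOn_Icc hab))
      exact ⟨C, fun t ht => hC t ht⟩
    choose K hK using hbd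
    set M : ℝ := 1 + ∑ p : Fin (n + 1) × Fin (n + 1), |K p| with hM
    have hM1 : 1 ≤ M := by
      have : (0:ℝ) ≤ ∑ p : Fin (n + 1) × Fin (n + 1), |K p| :=
        Finset.sum_nonneg fun p _ => abs_nonneg _
      linarith
    have hMK : ∀ p, K p ≤ M := by
      intro p
      have h1 : |K p| ≤ ∑ q : Fin (n + 1) × Fin (n + 1), |K q| :=
        Finset.single_le_sum (fun q _ => abs_nonneg (K q)) (Finset.mem_univ p)
      calc K p ≤ |K p| := le_abs_self _
        _ ≤ ∑ q, |K q| := h1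
        _ ≤ M := by rw [hM]; linarith
    -- transfer bounds to iteratedDeriv on Ioo
    have htrans : ∀ i, ∀ k ≤ n, ∀ t ∈ Ioo a b, |iteratedDeriv k (f i) t| ≤ M := by
      intro i k hk t ht
      have h1 : iteratedDeriv k (f i) t = iteratedDerivWithin k (f i) (Ioo a b) t :=
        (itdw_open isOpen_Ioo ht).symm
      have h2 : iteratedDerivWithin k (f i) (Ioo a b) t
          = iteratedDerivWithin k (f i) (Icc a b) t := by
        rw [iteratedDerivWithin_eq_iteratedFDerivWithin,
          iteratedDerivWithin_eq_iteratedFDerivWithin]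
        rw [show Ioo a b = Icc a b ∩ Ioo a b from
          (inter_eq_self_of_subset_right Ioo_subset_Icc_self).symm,
          iteratedFDerivWithin_inter_open isOpen_Ioo ht]
      rw [h1, h2]
      exact le_trans (hK (i, ⟨k, by omega⟩) t (Ioo_subset_Icc_self ht)) (hMK _)
    have hsm : ∀ i, ContDiffOn ℝ (n : ℕ) (f i) (Ioo a b) :=
      fun i => (hf i).mono Ioo_subset_Icc_self
    refine ⟨(n + 1).factorial * M ^ (n + 1), by positivity, ?_⟩
    -- the inequality holds on the open cube
    have hopen_ineq : ∀ x : Fin (n + 1) → ℝ, (∀ i, x i ∈ Ioo a b) →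
        |Matrix.det (Matrix.of fun i j : Fin (n + 1) => f i (x j))| ≤
          (n + 1).factorial * M ^ (n + 1) * |∏ i : Fin (n + 1), ∏ j ∈ Finset.Ioi i, (x j - x i)| :=
      main_ind n a b M f hsm htrans
    -- extend by continuity
    intro x hx
    set φ : (Fin (n + 1) → ℝ) → ℝ := fun y =>
      (n + 1).factorial * M ^ (n + 1) * |∏ i : Fin (n + 1), ∏ j ∈ Finset.Ioi i, (y j - y i)|
        - |Matrix.det (Matrix.of fun i j : Fin (n + 1) => f i (y j))| with hφ
    set T : Set (Fin (n + 1) → ℝ) := Set.pi univ (fun _ => Icc a b) with hT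
    set S : Set (Fin (n + 1) → ℝ) := Set.pi univ (fun _ => Ioo a b) with hS
    have hxT : x ∈ T := by intro i _; exact hx i
    have hclos : T ⊆ closure S := by
      rw [hS, closure_pi_set]
      intro y hy i hi
      rw [closure_Ioo hab.ne]
      exact hy i hi
    have hcont : ContinuousOn φ T := by
      apply ContinuousOn.sub
      · apply ContinuousOn.mul continuousOn_const
        apply ContinuousOn.abs
        apply continuousOn_finset_prod
        intro i _
        apply continuousOn_finset_prod
        intro j _
        exact ((continuous_apply j).sub (continuous_apply i)).continuousOn
      · apply ContinuousOn.abs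
        have hdet : Continuous fun A : Matrix (Fin (n + 1)) (Fin (n + 1)) ℝ => A.det :=
          Continuous.matrix_det continuous_id
        apply hdet.comp_continuousOn
        apply continuousOn_pi.2
        intro i
        apply continuousOn_pi.2
        intro j
        exact (hf i).continuousOn.comp (continuous_apply j).continuousOn fun y hy => hy j trivial
    have hSval : ∀ y ∈ S, 0 ≤ φ y := by
      intro y hy
      have := hopen_ineq y (fun i => hy i trivial)
      rw [hφ]
      dsimp only
      linarith
    have hneS : (nhdsWithin x S).NeBot := mem_closure_iff_nhdsWithin_neBot.1 (hclos hxT)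
    have htends : Filter.Tendsto φ (nhdsWithin x S) (nhds (φ x)) :=
      (hcont x hxT).mono (fun y hy i _ => Ioo_subset_Icc_self (hy i trivial))
    have h0 : 0 ≤ φ x :=
      ge_of_tendsto htends (Filter.eventually_iff_exists_mem.2
        ⟨S, self_mem_nhdsWithin, fun y hy => hSval y hy⟩)
    rw [hφ] at h0
    dsimp only at h0
    linarith
  · -- a = b
    rcases Nat.eq_zero_or_pos n with rfl | hn
    · refine ⟨|f 0 a| + 1, by positivity, ?_⟩
      intro x hx
      have hx0 : x 0 = a := le_antisymm (hx 0).2 (hx 0).1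
      have h2 : Matrix.det (Matrix.of fun i j : Fin 1 => f i (x j)) = f 0 a := by
        rw [Matrix.det_fin_one]; simp [hx0]
      have h1 : (∏ i : Fin 1, ∏ j ∈ Finset.Ioi i, (x j - x i)) = 1 := by simp
      rw [h2, h1]
      simp only [abs_one, mul_one]
      linarith [le_abs_self (f 0 a), abs_nonneg (f 0 a)]
    · refine ⟨1, one_pos, ?_⟩
      intro x hx
      have hxc : ∀ j, x j = a := fun j => le_antisymm (hx j).2 (hx j).1
      have h0 : Matrix.det (Matrix.of fun i j : Fin (n + 1) => f i (x j)) = 0 := by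
        apply Matrix.det_zero_of_column_eq (i := ⟨0, by omega⟩) (j := ⟨1, by omega⟩)
        · intro h
          have := congrArg Fin.val h
          simp at this
        · intro k
          simp [hxc]
      rw [h0]
      simp [abs_nonneg]
  · -- b < a : empty interval
    refine ⟨1, one_pos, ?_⟩
    intro x hx
    have := (hx 0).1.trans (hx 0).2
    linarith
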